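/- Let ξ₁, ξ₂, … be i.i.d. real-valued random variables with common distribution function F_ξ ∈ 𝒞, and let η be a counting random variable independent of the ξ's with E η < ∞. Then the distribution function of the randomly stopped maximum ξ_{(η)} = max{0, ξ₁, …, ξ_η} belongs to 𝒞. -/

import Mathlib

open Filter MeasureTheory ProbabilityTheory Topology

/-- `T` is a consistently varying tail function: `lim_{y↑1} limsup_{x→∞} T(xy)/T(x) = 1`. -/
def ConsistentlyVaryingTail (T : ℝ → ℝ) : Prop :=
  Tendsto (fun y : ℝ => limsup (fun x : ℝ => T (x * y) / T x) atTop)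
    (nhdsWithin 1 (Set.Iio 1)) (nhds 1)

/-- `runningMax ξ n ω = max {0, ξ 1 ω, …, ξ n ω}`. -/
noncomputable def runningMax {Ω : Type*} (ξ : ℕ → Ω → ℝ) : ℕ → Ω → ℝ
  | 0 => fun _ => 0
  | n + 1 => fun ω => max (runningMax ξ n ω) (ξ (n + 1) ω)

/-- Analogue of `runningMax` acting on a sequence of reals. -/
noncomputable def seqMax : ℕ → (ℕ → ℝ) → ℝ
  | 0 => fun _ => 0
  | n + 1 => fun u => max (seqMax n u) (u (n + 1))

lemma measurable_seqMax (n : ℕ) : Measurable (seqMax n) := by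
  induction n with
  | zero => exact measurable_const
  | succ n ih => exact Measurable.max ih (measurable_pi_apply _)

lemma runningMax_eq_seqMax {Ω : Type*} (ξ : ℕ → Ω → ℝ) (n : ℕ) (ω : Ω) :
    runningMax ξ n ω = seqMax n (fun k => ξ k ω) := by
  induction n with
  | zero => rfl
  | succ n ih => simp only [runningMax, seqMax, ih]

lemma Icc_one_succ (n : ℕ) : Finset.Icc 1 (n + 1) = insert (n + 1) (Finset.Icc 1 n) := by
  ext k; simp only [Finset.mem_Icc, Finset.mem_insert]; omega

lemma runningMax_le_iff {Ω : Type*} (ξ : ℕ → Ω → ℝ) {x : ℝ} (hx : 0 ≤ x) (n : ℕ) (ω : Ω) :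
    runningMax ξ n ω ≤ x ↔ ∀ k ∈ Finset.Icc 1 n, ξ k ω ≤ x := by
  induction n with
  | zero => simpa [runningMax] using hx
  | succ n ih =>
    rw [Icc_one_succ]
    simp only [runningMax, max_le_iff, ih, Finset.forall_mem_insert]
    tauto

lemma le_runningMax {Ω : Type*} (ξ : ℕ → Ω → ℝ) {n : ℕ} (hn : 1 ≤ n) (ω : Ω) :
    ξ n ω ≤ runningMax ξ n ω := by
  cases n with
  | zero => omega
  | succ n => exact le_max_right _ _

/-- Corollary 1: for i.i.d. random variables with common d.f. in `𝒞` and a counting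
random variable `η` with finite mean, the randomly stopped maximum has a consistently
varying tail. -/
theorem randomly_stopped_maximum_cvar_iid
    {Ω : Type*} [MeasurableSpace Ω] (μ : Measure Ω) [IsProbabilityMeasure μ]
    (ξ : ℕ → Ω → ℝ) (hmeas : ∀ k, Measurable (ξ k))
    (hindep : iIndepFun ξ μ)
    (hident : ∀ k : ℕ, 1 ≤ k → Measure.map (ξ k) μ = Measure.map (ξ 1) μ)
    (η : Ω → ℕ) (hηmeas : Measurable η)
    (hηnondeg : μ {ω | η ω = 0} ≠ 1)
    (hηindep : IndepFun η (fun ω => fun k => ξ k ω) μ)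
    (hpos : ∀ x : ℝ, 0 < (μ {ω | ξ 1 ω > x}).toReal)
    (hC : ConsistentlyVaryingTail (fun x => (μ {ω | ξ 1 ω > x}).toReal))
    (hmean : Summable (fun n : ℕ => (n : ℝ) * (μ {ω | η ω = n}).toReal)) :
    ConsistentlyVaryingTail (fun x => (μ {ω | runningMax ξ (η ω) ω > x}).toReal) := by
  classical
  unfold ConsistentlyVaryingTail at hC ⊢
  set Fb : ℝ → ℝ := fun x => (μ {ω | ξ 1 ω > x}).toReal with hFbdef
  set F : ℝ → ℝ := fun x => (μ {ω | ξ 1 ω ≤ x}).toReal with hFdef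
  set p : ℕ → ℝ := fun n => (μ {ω | η ω = n}).toReal with hpdef
  set T : ℝ → ℝ := fun x => (μ {ω | runningMax ξ (η ω) ω > x}).toReal with hTdef
  have hFbpos : ∀ x, 0 < Fb x := hpos
  have hFbne0 : ∀ x, μ {ω | ξ 1 ω > x} ≠ 0 := by
    intro x h
    have := hpos x
    rw [h] at this
    simp at this
  have hvec : Measurable (fun ω => fun k => ξ k ω) := measurable_pi_lambda _ hmeas
  have hMmeas : ∀ n, Measurable (runningMax ξ n) := by
    intro n
    have h : runningMax ξ n = fun ω => seqMax n (fun k => ξ k ω) :=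
      funext (runningMax_eq_seqMax ξ n)
    rw [h]; exact (measurable_seqMax n).comp hvec
  have hμη : ∀ n : ℕ, MeasurableSet {ω | η ω = n} :=
    fun n => hηmeas (measurableSet_singleton n)
  have hmap : ∀ k, 1 ≤ k → ∀ s : Set ℝ, MeasurableSet s → μ (ξ k ⁻¹' s) = μ (ξ 1 ⁻¹' s) := by
    intro k hk s hs
    rw [← Measure.map_apply (hmeas k) hs, hident k hk, Measure.map_apply (hmeas 1) hs]
  -- Fb = 1 - F
  have hFb_eq : ∀ x, Fb x = 1 - F x := by
    intro x
    have hset : {ω | ξ 1 ω > x} = {ω | ξ 1 ω ≤ x}ᶜ := by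
      ext ω; simp [not_le]
    have hms : MeasurableSet {ω | ξ 1 ω ≤ x} := hmeas 1 measurableSet_Iic
    have : μ {ω | ξ 1 ω ≤ x}ᶜ = 1 - μ {ω | ξ 1 ω ≤ x} := prob_compl_eq_one_sub hms
    show (μ {ω | ξ 1 ω > x}).toReal = 1 - (μ {ω | ξ 1 ω ≤ x}).toReal
    rw [hset, this, ENNReal.toReal_sub_of_le prob_le_one ENNReal.one_ne_top, ENNReal.toReal_one]
  have hF01 : ∀ x, 0 ≤ F x ∧ F x ≤ 1 := by
    intro x
    refine ⟨ENNReal.toReal_nonneg, ?_⟩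
    have : F x = 1 - Fb x := by rw [hFb_eq x]; ring
    rw [this]
    have := hFbpos x
    linarith
  -- Fb → 0 at ∞
  have hFb0 : Tendsto Fb atTop (𝓝 0) := by
    have h1 : Tendsto (fun x : ℝ => μ {ω | ξ 1 ω > x}) atTop
        (𝓝 (μ (⋂ x : ℝ, {ω | ξ 1 ω > x}))) := by
      refine tendsto_measure_iInter_atTop
        (fun x => (hmeas 1 measurableSet_Ioi).nullMeasurableSet) ?_ ⟨0, measure_ne_top μ _⟩
      intro a b hab ω hω
      exact lt_of_le_of_lt hab hω
    have h2 : (⋂ x : ℝ, {ω | ξ 1 ω > x}) = (∅ : Set Ω) := by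
      ext ω
      simp only [Set.mem_iInter, Set.mem_setOf_eq, Set.mem_empty_iff_false, iff_false, not_forall,
        not_lt]
      exact ⟨ξ 1 ω, le_refl _⟩
    rw [h2, measure_empty] at h1
    have h3 := (ENNReal.tendsto_toReal (by simp : (0 : ENNReal) ≠ ⊤)).comp h1
    rw [ENNReal.toReal_zero] at h3
    exact h3
  have hFto1 : Tendsto F atTop (𝓝 1) := by
    have hfe : F = fun x => 1 - Fb x := by
      funext x; rw [hFb_eq x]; ring
    rw [hfe]
    simpa using tendsto_const_nhds.sub hFb0
  -- decomposition of the tail of the stopped maximum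
  have hdecomp : ∀ x : ℝ, μ {ω | runningMax ξ (η ω) ω > x}
      = ∑' n, μ {ω | η ω = n} * μ {ω | runningMax ξ n ω > x} := by
    intro x
    have hset : {ω | runningMax ξ (η ω) ω > x}
        = ⋃ n, ({ω | η ω = n} ∩ {ω | runningMax ξ n ω > x}) := by
      ext ω
      simp only [Set.mem_setOf_eq, Set.mem_iUnion, Set.mem_inter_iff]
      constructor
      · exact fun h => ⟨η ω, rfl, h⟩
      · rintro ⟨n, hn, h⟩; rwa [hn]
    have hdisj : Pairwise (Function.onFun Disjoint
        (fun n => {ω | η ω = n} ∩ {ω | runningMax ξ n ω > x})) := by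
      intro i j hij
      refine Set.disjoint_left.mpr ?_
      rintro ω ⟨h1, -⟩ ⟨h2, -⟩
      exact hij (h1.symm.trans h2)
    rw [hset, measure_iUnion hdisj (fun n => (hμη n).inter (hMmeas n measurableSet_Ioi))]
    refine tsum_congr fun n => ?_
    have ht : {ω | runningMax ξ n ω > x}
        = (fun ω => fun k => ξ k ω) ⁻¹' (seqMax n ⁻¹' (Set.Ioi x)) := by
      ext ω
      simp [Set.mem_preimage, Set.mem_Ioi, runningMax_eq_seqMax ξ n ω]
    have hs : {ω | η ω = n} = η ⁻¹' {n} := rfl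
    rw [hs, ht, hηindep.measure_inter_preimage_eq_mul _ _ (measurableSet_singleton n)
      (measurable_seqMax n measurableSet_Ioi)]
  -- tail of the maximum of n variables
  have hq : ∀ (n : ℕ) {x : ℝ}, 0 ≤ x →
      μ {ω | runningMax ξ n ω > x} = 1 - (μ {ω | ξ 1 ω ≤ x}) ^ n := by
    intro n x hx
    have hA : MeasurableSet {ω | runningMax ξ n ω > x} := hMmeas n measurableSet_Ioi
    have hcompl : {ω | runningMax ξ n ω > x}ᶜ = ⋂ k ∈ Finset.Icc 1 n, ξ k ⁻¹' (Set.Iic x) := by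
      ext ω
      simp only [Set.mem_compl_iff, Set.mem_setOf_eq, not_lt, Set.mem_iInter, Set.mem_preimage,
        Set.mem_Iic]
      exact runningMax_le_iff ξ hx n ω
    have hprod := hindep.measure_inter_preimage_eq_mul (Finset.Icc 1 n)
      (sets := fun _ => Set.Iic x) (fun i _ => measurableSet_Iic)
    have heach : ∀ k ∈ Finset.Icc 1 n, μ (ξ k ⁻¹' Set.Iic x) = μ {ω | ξ 1 ω ≤ x} := by
      intro k hk
      rw [hmap k (Finset.mem_Icc.1 hk).1 _ measurableSet_Iic]
      rfl
    have hc : μ ({ω | runningMax ξ n ω > x}ᶜ) = (μ {ω | ξ 1 ω ≤ x}) ^ n := by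
      rw [hcompl, hprod, Finset.prod_congr rfl heach, Finset.prod_const, Nat.card_Icc]
      norm_num
    have h1 := prob_compl_eq_one_sub (μ := μ) hA.compl
    rw [compl_compl, hc] at h1
    exact h1
  -- sum of the probabilities of η is 1
  have hμp1 : ∑' n, μ {ω | η ω = n} = 1 := by
    have huniv : (⋃ n, {ω | η ω = n}) = Set.univ := by
      ext ω; simp
    have hdisj : Pairwise (Function.onFun Disjoint (fun n => {ω | η ω = n})) := by
      intro i j hij
      refine Set.disjoint_left.mpr ?_
      rintro ω h1 h2
      exact hij (h1.symm.trans h2)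
    rw [← measure_iUnion hdisj hμη, huniv, measure_univ]
  -- some n₀ ≥ 1 has positive probability
  obtain ⟨n₀, hn₀1, hn₀⟩ : ∃ n, 1 ≤ n ∧ μ {ω | η ω = n} ≠ 0 := by
    by_contra h
    push_neg at h
    have h0 : ∑' n, μ {ω | η ω = n} = μ {ω | η ω = 0} :=
      tsum_eq_single 0 (fun n hn => h n (by omega))
    exact hηnondeg (by rw [← h0, hμp1])
  have hppos : 0 < p n₀ := ENNReal.toReal_pos hn₀ (measure_ne_top μ _)
  -- positivity of T
  have hTpos : ∀ x, 0 < T x := by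
    intro x
    have hsub : {ω | η ω = n₀} ∩ {ω | ξ n₀ ω > x} ⊆ {ω | runningMax ξ (η ω) ω > x} := by
      rintro ω ⟨h1, h2⟩
      simp only [Set.mem_setOf_eq] at *
      rw [h1]
      exact lt_of_lt_of_le h2 (le_runningMax ξ hn₀1 ω)
    have hindn : IndepFun η (ξ n₀) μ := by
      have := hηindep.comp measurable_id (measurable_pi_apply n₀)
      exact this
    have hinter : μ ({ω | η ω = n₀} ∩ {ω | ξ n₀ ω > x})
        = μ {ω | η ω = n₀} * μ {ω | ξ 1 ω > x} := by
      have hs : {ω | η ω = n₀} = η ⁻¹' {n₀} := rfl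
      have ht : {ω | ξ n₀ ω > x} = ξ n₀ ⁻¹' (Set.Ioi x) := rfl
      rw [hs, ht, hindn.measure_inter_preimage_eq_mul _ _ (measurableSet_singleton n₀)
        measurableSet_Ioi, hmap n₀ hn₀1 _ measurableSet_Ioi]
      rfl
    have hle : μ {ω | η ω = n₀} * μ {ω | ξ 1 ω > x} ≤ μ {ω | runningMax ξ (η ω) ω > x} := by
      rw [← hinter]; exact measure_mono hsub
    refine ENNReal.toReal_pos (fun h0 => ?_) (measure_ne_top μ _)
    rw [h0, le_zero_iff] at hle
    exact mul_ne_zero hn₀ (hFbne0 x) hle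
  have hTanti : ∀ {a b : ℝ}, a ≤ b → T b ≤ T a := by
    intro a b hab
    refine ENNReal.toReal_mono (measure_ne_top μ _) (measure_mono ?_)
    intro ω hω
    exact lt_of_le_of_lt hab hω
  have hFbanti : ∀ {a b : ℝ}, a ≤ b → Fb b ≤ Fb a := by
    intro a b hab
    refine ENNReal.toReal_mono (measure_ne_top μ _) (measure_mono ?_)
    intro ω hω
    exact lt_of_le_of_lt hab hω
  -- the mean of η
  set m : ℝ := ∑' n : ℕ, (n : ℝ) * p n with hmdef
  have hmpos : 0 < m := by
    have h1 : 0 < (n₀ : ℝ) * p n₀ :=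
      mul_pos (by exact_mod_cast Nat.lt_of_lt_of_le Nat.zero_lt_one hn₀1) hppos
    have h2 : (n₀ : ℝ) * p n₀ ≤ m :=
      Summable.le_tsum hmean n₀ (fun i _ => mul_nonneg (Nat.cast_nonneg i) ENNReal.toReal_nonneg)
    linarith
  -- the key asymptotic: T x / Fb x → m
  have hr : Tendsto (fun x => T x / Fb x) atTop (𝓝 m) := by
    have hgeom : ∀ (x : ℝ) (n : ℕ), 1 - F x ^ n = Fb x * ∑ k ∈ Finset.range n, F x ^ k := by
      intro x n
      rw [hFb_eq x]
      linear_combination geom_sum_mul (F x) n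
    have hTeq : ∀ x : ℝ, 0 ≤ x →
        T x / Fb x = ∑' n, p n * ∑ k ∈ Finset.range n, F x ^ k := by
      intro x hx
      have h1 : T x = ∑' n, p n * (1 - F x ^ n) := by
        show (μ {ω | runningMax ξ (η ω) ω > x}).toReal = _
        rw [hdecomp x, ENNReal.tsum_toReal_eq
          (fun n => ENNReal.mul_ne_top (measure_ne_top μ _) (measure_ne_top μ _))]
        refine tsum_congr fun n => ?_
        rw [ENNReal.toReal_mul, hq n hx, ENNReal.toReal_sub_of_le
          (pow_le_one' prob_le_one n) ENNReal.one_ne_top, ENNReal.toReal_pow, ENNReal.toReal_one]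
      have h2 : T x = Fb x * ∑' n, p n * ∑ k ∈ Finset.range n, F x ^ k := by
        rw [h1]
        have : (fun n => p n * (1 - F x ^ n))
            = fun n => Fb x * (p n * ∑ k ∈ Finset.range n, F x ^ k) := by
          funext n; rw [hgeom x n]; ring
        rw [this, tsum_mul_left]
      rw [h2, mul_div_cancel_left₀ _ (ne_of_gt (hFbpos x))]
    have hlim : Tendsto (fun x => ∑' n, p n * ∑ k ∈ Finset.range n, F x ^ k) atTop (𝓝 m) := by
      have hm' : m = ∑' n, p n * n := by
        rw [hmdef]; exact tsum_congr fun n => mul_comm _ _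
      rw [hm']
      refine tendsto_tsum_of_dominated_convergence hmean (fun n => ?_) ?_
      · have hsum : Tendsto (fun x => ∑ k ∈ Finset.range n, F x ^ k) atTop
            (𝓝 (∑ k ∈ Finset.range n, (1 : ℝ))) := by
          refine tendsto_finset_sum _ (fun k _ => ?_)
          simpa using hFto1.pow k
        have h2 := (tendsto_const_nhds (x := p n)).mul hsum
        simpa using h2
      · refine Eventually.of_forall fun x n => ?_
        obtain ⟨h0, h1⟩ := hF01 x
        have hs0 : 0 ≤ ∑ k ∈ Finset.range n, F x ^ k :=
          Finset.sum_nonneg fun k _ => pow_nonneg h0 k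
        have hsn : ∑ k ∈ Finset.range n, F x ^ k ≤ n := by
          calc ∑ k ∈ Finset.range n, F x ^ k ≤ ∑ _k ∈ Finset.range n, (1 : ℝ) :=
                Finset.sum_le_sum fun k _ => pow_le_one₀ h0 h1
            _ = n := by simp
        have hp0 : 0 ≤ p n := ENNReal.toReal_nonneg
        rw [Real.norm_eq_abs, abs_of_nonneg (by positivity)]
        calc p n * ∑ k ∈ Finset.range n, F x ^ k ≤ p n * n :=
              mul_le_mul_of_nonneg_left hsn hp0
            _ = (n : ℝ) * p n := mul_comm _ _
    refine Tendsto.congr' ?_ hlim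
    filter_upwards [eventually_ge_atTop (0 : ℝ)] with x hx
    exact (hTeq x hx).symm
  -- final limsup bookkeeping
  rw [Metric.tendsto_nhds] at hC ⊢
  intro ε hε
  set ε₁ : ℝ := min ε 1 / 8 with hε₁def
  have hε₁pos : 0 < ε₁ := by
    have : 0 < min ε 1 := lt_min hε one_pos
    rw [hε₁def]; linarith
  have hε₁ε : ε₁ ≤ ε / 8 := by
    rw [hε₁def]
    have := min_le_left ε 1
    linarith
  have hε₁1 : ε₁ ≤ 1 / 8 := by
    rw [hε₁def]
    have := min_le_right ε 1
    linarith
  have hyIoo : Set.Ioo (1 / 2 : ℝ) 1 ∈ nhdsWithin 1 (Set.Iio 1) :=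
    Ioo_mem_nhdsLT_of_mem (by norm_num)
  filter_upwards [hC ε₁ hε₁pos, hyIoo] with y hfy hy
  set B : ℝ → ℝ := fun x => Fb (x * y) / Fb x with hBdef
  set L : ℝ := limsup B atTop with hLdef
  rw [Real.dist_eq] at hfy
  have hL8 : |L - 1| < ε₁ := hfy
  have hLub : L ≤ 1 + ε₁ := by
    have := abs_lt.1 hL8; linarith [this.2]
  have hLlb : 7 / 8 ≤ L := by
    have := abs_lt.1 hL8; linarith [this.1]
  have hBlb : ∀ᶠ x in atTop, 1 ≤ B x := by
    filter_upwards [eventually_ge_atTop (0 : ℝ)] with x hx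
    have hxy : x * y ≤ x := mul_le_of_le_one_right hx hy.2.le
    have := hFbanti hxy
    rw [hBdef]
    exact (one_le_div (hFbpos x)).2 this
  have hBbdd : IsBoundedUnder (· ≤ ·) atTop B := by
    by_contra hnb
    have hemp : {a : ℝ | ∀ᶠ x in atTop, B x ≤ a} = ∅ := by
      ext a
      simp only [Set.mem_setOf_eq, Set.mem_empty_iff_false, iff_false]
      intro h
      exact hnb ⟨a, by rwa [eventually_map]⟩
    have hL0 : L = 0 := by
      rw [hLdef, limsup_eq, hemp, Real.sInf_empty]
    rw [hL0] at hLlb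
    linarith
  have hBub : ∀ᶠ x in atTop, B x < L + ε₁ :=
    eventually_lt_of_limsup_lt (by linarith : limsup B atTop < L + ε₁) hBbdd
  have hy0 : (0 : ℝ) < y := by linarith [hy.1]
  have hxy : Tendsto (fun x : ℝ => x * y) atTop atTop :=
    Tendsto.atTop_mul_const hy0 tendsto_id
  have hrc : Tendsto (fun x => (T (x * y) / Fb (x * y)) / (T x / Fb x)) atTop (𝓝 1) := by
    have h1 : Tendsto (fun x => T (x * y) / Fb (x * y)) atTop (𝓝 m) := hr.comp hxy
    have h2 := h1.div hr (ne_of_gt hmpos)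
    rw [div_self (ne_of_gt hmpos)] at h2
    exact h2
  have hcub : ∀ᶠ x in atTop,
      dist ((T (x * y) / Fb (x * y)) / (T x / Fb x)) 1 < ε₁ :=
    (Metric.tendsto_nhds.1 hrc) ε₁ hε₁pos
  have hDeq : ∀ x : ℝ, T (x * y) / T x
      = ((T (x * y) / Fb (x * y)) / (T x / Fb x)) * B x := by
    intro x
    rw [hBdef]
    have h1 := ne_of_gt (hTpos x)
    have h2 := ne_of_gt (hFbpos x)
    have h3 := ne_of_gt (hFbpos (x * y))
    field_simp
  have hKub : ∀ᶠ x in atTop, T (x * y) / T x ≤ (1 + ε₁) * (L + ε₁) := by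
    filter_upwards [hBub, hcub, hBlb] with x h1 h2 h3
    rw [hDeq x]
    rw [Real.dist_eq] at h2
    have hc := abs_lt.1 h2
    have hcub' : (T (x * y) / Fb (x * y)) / (T x / Fb x) ≤ 1 + ε₁ := by linarith [hc.2]
    have hc0 : 0 ≤ (T (x * y) / Fb (x * y)) / (T x / Fb x) := by
      have := div_pos (div_pos (hTpos (x * y)) (hFbpos (x * y))) (div_pos (hTpos x) (hFbpos x))
      linarith
    have hB0 : 0 ≤ B x := by linarith
    exact mul_le_mul hcub' h1.le hB0 (by linarith)
  have hKlb : ∀ᶠ x in atTop, 1 - ε₁ ≤ T (x * y) / T x := by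
    filter_upwards [hcub, hBlb] with x h2 h3
    rw [hDeq x]
    rw [Real.dist_eq] at h2
    have hc := abs_lt.1 h2
    have hclb : 1 - ε₁ ≤ (T (x * y) / Fb (x * y)) / (T x / Fb x) := by linarith [hc.1]
    nlinarith
  have hDbdd : IsBoundedUnder (· ≤ ·) atTop (fun x => T (x * y) / T x) :=
    ⟨(1 + ε₁) * (L + ε₁), by rwa [eventually_map]⟩
  have hgub : limsup (fun x => T (x * y) / T x) atTop ≤ (1 + ε₁) * (L + ε₁) :=
    limsup_le_of_le (isCoboundedUnder_le_of_eventually_le atTop hKlb) hKub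
  have hglb : 1 - ε₁ ≤ limsup (fun x => T (x * y) / T x) atTop :=
    le_limsup_of_frequently_le hKlb.frequently hDbdd
  rw [Real.dist_eq, abs_lt]
  constructor
  · nlinarith
  · nlinarith
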